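/- Let ξ ∈ ℝ and let a : ℝ → ℝ be twice continuously differentiable with a(t) > 0 for all t. Define the planar velocity field u₁(t,x,y) = (a'(t)/a(t))·x − (ξ/a(t)²)·y and u₂(t,x,y) = (ξ/a(t)²)·x + (a'(t)/a(t))·y. Then the material derivative of this field satisfies, at every (t,x,y), ∂u₁/∂t + u₁·∂u₁/∂x + u₂·∂u₁/∂y = (a''(t)/a(t) − ξ²/a(t)⁴)·x and ∂u₂/∂t + u₁·∂u₂/∂x + u₂·∂u₂/∂y = (a''(t)/a(t) − ξ²/a(t)⁴)·y. -/

import Mathlib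

/-- For the planar velocity field
`u₁(t,x,y) = (a'(t)/a(t))·x − (ξ/a(t)²)·y`, `u₂(t,x,y) = (ξ/a(t)²)·x + (a'(t)/a(t))·y`
with `a` twice continuously differentiable and positive, the material derivative satisfies
`∂u₁/∂t + u₁·∂u₁/∂x + u₂·∂u₁/∂y = (a''/a − ξ²/a⁴)·x` and
`∂u₂/∂t + u₁·∂u₂/∂x + u₂·∂u₂/∂y = (a''/a − ξ²/a⁴)·y` at every point. -/
theorem material_derivative_rotational_field
    (ξ : ℝ) (a : ℝ → ℝ) (hreg : ContDiff ℝ 2 a) (hpos : ∀ t, 0 < a t)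
    (u₁ u₂ : ℝ → ℝ → ℝ → ℝ)
    (hu₁ : ∀ t x y, u₁ t x y = (deriv a t / a t) * x - (ξ / (a t) ^ 2) * y)
    (hu₂ : ∀ t x y, u₂ t x y = (ξ / (a t) ^ 2) * x + (deriv a t / a t) * y) :
    ∀ t x y,
      deriv (fun τ => u₁ τ x y) t
          + u₁ t x y * deriv (fun χ => u₁ t χ y) x
          + u₂ t x y * deriv (fun υ => u₁ t x υ) y
        = (deriv (deriv a) t / a t - ξ ^ 2 / (a t) ^ 4) * x ∧
      deriv (fun τ => u₂ τ x y) t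
          + u₁ t x y * deriv (fun χ => u₂ t χ y) x
          + u₂ t x y * deriv (fun υ => u₂ t x υ) y
        = (deriv (deriv a) t / a t - ξ ^ 2 / (a t) ^ 4) * y := by
  have h2 : ContDiff ℝ ((1 : ℕ) + 1) a := by exact_mod_cast hreg
  obtain ⟨hdiff, -, hderiv1⟩ := contDiff_succ_iff_deriv.mp h2
  have hda : Differentiable ℝ (deriv a) := hderiv1.differentiable (by simp)
  intro t x y
  have hne : a t ≠ 0 := (hpos t).ne'
  have ha : HasDerivAt a (deriv a t) t := (hdiff t).hasDerivAt
  have ha' : HasDerivAt (deriv a) (deriv (deriv a) t) t := (hda t).hasDerivAt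
  have hsq : HasDerivAt (fun τ => a τ ^ 2) (2 * a t ^ 1 * deriv a t) t := ha.pow 2
  have hsqne : a t ^ 2 ≠ 0 := pow_ne_zero 2 hne
  have hq : HasDerivAt (fun τ => deriv a τ / a τ)
      ((deriv (deriv a) t * a t - deriv a t * deriv a t) / a t ^ 2) t := ha'.div ha hne
  have hr : HasDerivAt (fun τ => ξ / a τ ^ 2)
      ((0 * a t ^ 2 - ξ * (2 * a t ^ 1 * deriv a t)) / (a t ^ 2) ^ 2) t :=
    (hasDerivAt_const t ξ).div hsq hsqne
  have hT1 : deriv (fun τ => u₁ τ x y) t =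
      ((deriv (deriv a) t * a t - deriv a t * deriv a t) / a t ^ 2) * x
        - ((0 * a t ^ 2 - ξ * (2 * a t ^ 1 * deriv a t)) / (a t ^ 2) ^ 2) * y := by
    have : (fun τ => u₁ τ x y)
        = fun τ => (deriv a τ / a τ) * x - (ξ / a τ ^ 2) * y := funext fun τ => hu₁ τ x y
    rw [this]
    exact ((hq.mul_const x).sub (hr.mul_const y)).deriv
  have hT2 : deriv (fun τ => u₂ τ x y) t =
      ((0 * a t ^ 2 - ξ * (2 * a t ^ 1 * deriv a t)) / (a t ^ 2) ^ 2) * x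
        + ((deriv (deriv a) t * a t - deriv a t * deriv a t) / a t ^ 2) * y := by
    have : (fun τ => u₂ τ x y)
        = fun τ => (ξ / a τ ^ 2) * x + (deriv a τ / a τ) * y := funext fun τ => hu₂ τ x y
    rw [this]
    exact ((hr.mul_const x).add (hq.mul_const y)).deriv
  have hX1 : deriv (fun χ => u₁ t χ y) x = deriv a t / a t := by
    have : (fun χ => u₁ t χ y)
        = fun χ => (deriv a t / a t) * χ - (ξ / a t ^ 2) * y := funext fun χ => hu₁ t χ y
    rw [this]
    exact (((hasDerivAt_id x).const_mul _).sub_const _).deriv.trans (mul_one _)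
  have hY1 : deriv (fun υ => u₁ t x υ) y = -(ξ / a t ^ 2) := by
    have : (fun υ => u₁ t x υ)
        = fun υ => (deriv a t / a t) * x - (ξ / a t ^ 2) * υ := funext fun υ => hu₁ t x υ
    rw [this]
    have := ((hasDerivAt_id y).const_mul (ξ / a t ^ 2)).const_sub ((deriv a t / a t) * x)
    simpa using this.deriv
  have hX2 : deriv (fun χ => u₂ t χ y) x = ξ / a t ^ 2 := by
    have : (fun χ => u₂ t χ y)
        = fun χ => (ξ / a t ^ 2) * χ + (deriv a t / a t) * y := funext fun χ => hu₂ t χ y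
    rw [this]
    exact (((hasDerivAt_id x).const_mul _).add_const _).deriv.trans (mul_one _)
  have hY2 : deriv (fun υ => u₂ t x υ) y = deriv a t / a t := by
    have : (fun υ => u₂ t x υ)
        = fun υ => (ξ / a t ^ 2) * x + (deriv a t / a t) * υ := funext fun υ => hu₂ t x υ
    rw [this]
    have := ((hasDerivAt_id y).const_mul (deriv a t / a t)).const_add ((ξ / a t ^ 2) * x)
    simpa using this.deriv
  constructor
  · rw [hT1, hX1, hY1, hu₁, hu₂]
    field_simp
    ring
  · rw [hT2, hX2, hY2, hu₁, hu₂]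
    field_simp
    ring
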